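/- arXiv:1503.00508 — 4 statements merged into one kernel-verified Lean document; each statement's English description precedes it below -/
import Mathlib

section
/- Let n ≥ 1. Let T be a divergence-free symmetric 2-tensor field of class C¹ on EuclideanSpace ℝ n and let X be a C¹ conformal Killing field on EuclideanSpace ℝ n. Then for every point x, div(T♯X) x = (1/n)·(trace of T x)·(div X x), where trace of T x = Σᵢ (T x)(eᵢ, eᵢ) for an orthonormal basis (eᵢ). (This is the pointwise, flat-space form of Lemma 2.1 of the paper: for a divergence-free symmetric tensor paired with a conformal Killing field, the boundary flux density equals (n−2)/(2n)·Scal·δX in the curved case, and here reduces to the trace term.) -/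
open scoped RealInnerProductSpace

/-- The `i`-th standard basis vector of `EuclideanSpace ℝ (Fin n)`. -/
noncomputable def stdBasis (n : ℕ) (i : Fin n) : EuclideanSpace ℝ (Fin n) :=
  EuclideanSpace.single i (1 : ℝ)

/-- The Euclidean divergence of a vector field: the trace of its derivative. -/
noncomputable def divE (n : ℕ) (X : EuclideanSpace ℝ (Fin n) → EuclideanSpace ℝ (Fin n))
    (x : EuclideanSpace ℝ (Fin n)) : ℝ :=
  ∑ i : Fin n, ⟪fderiv ℝ X x (stdBasis n i), stdBasis n i⟫

set_option maxHeartbeats 1000000 in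
/-- **Pointwise flat-space form of Lemma 2.1.** If `T` is a divergence-free symmetric
2-tensor field of class `C¹` on Euclidean space and `X` is a `C¹` conformal Killing field,
then `div (T♯X) = (1/n) · (tr T) · (div X)` at every point. -/
theorem divergence_sharp_conformal_killing
    (n : ℕ) (hn : 1 ≤ n)
    (T : EuclideanSpace ℝ (Fin n) →
      (EuclideanSpace ℝ (Fin n) →L[ℝ] EuclideanSpace ℝ (Fin n) →L[ℝ] ℝ))
    (hT : ContDiff ℝ 1 T)
    (hTsymm : ∀ x v w, T x v w = T x w v)
    (hTdivfree : ∀ (x v : EuclideanSpace ℝ (Fin n)),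
      ∑ i : Fin n, fderiv ℝ T x (stdBasis n i) (stdBasis n i) v = 0)
    (X : EuclideanSpace ℝ (Fin n) → EuclideanSpace ℝ (Fin n))
    (hX : ContDiff ℝ 1 X)
    (hCK : ∀ (x v w : EuclideanSpace ℝ (Fin n)),
      ⟪fderiv ℝ X x v, w⟫ + ⟪fderiv ℝ X x w, v⟫ = (2 / (n : ℝ)) * divE n X x * ⟪v, w⟫)
    (Y : EuclideanSpace ℝ (Fin n) → EuclideanSpace ℝ (Fin n))
    (hY : ∀ x w, ⟪Y x, w⟫ = T x (X x) w) :
    ∀ x : EuclideanSpace ℝ (Fin n),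
      divE n Y x = (1 / (n : ℝ)) * (∑ i : Fin n, T x (stdBasis n i) (stdBasis n i)) *
        divE n X x := by
  intro x
  have hTd : Differentiable ℝ T := hT.differentiable one_ne_zero
  have hXd : Differentiable ℝ X := hX.differentiable one_ne_zero
  set e : Fin n → EuclideanSpace ℝ (Fin n) := stdBasis n with he
  -- basis representation
  have hrepr : ∀ v : EuclideanSpace ℝ (Fin n), ∑ j, v j • e j = v := by
    intro v
    ext i
    simp [he, stdBasis, Pi.single_apply]
  have hinner_e : ∀ (v : EuclideanSpace ℝ (Fin n)) (j : Fin n), ⟪v, e j⟫ = v j := by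
    intro v j
    simp [he, stdBasis, EuclideanSpace.inner_single_right]
  have he_app : ∀ i j : Fin n, e j i = if i = j then (1:ℝ) else 0 := by
    intro i j
    simp [he, stdBasis, EuclideanSpace.single_apply]
  -- Y equals an explicit formula
  have hZ : Y = fun y => ∑ j, (T y (X y) (e j)) • e j := by
    funext y
    refine ext_inner_right ℝ (fun w => ?_)
    rw [hY]
    have hw : T y (X y) w = ∑ j, w j * T y (X y) (e j) := by
      conv_lhs => rw [← hrepr w]
      rw [map_sum]
      simp [mul_comm]
    rw [hw, sum_inner]
    refine Finset.sum_congr rfl (fun j _ => ?_)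
    rw [real_inner_smul_left, real_inner_comm, hinner_e]
    ring
  -- derivative of the bilinear application
  have h1 : HasFDerivAt (fun y => T y (X y))
      ((T x).comp (fderiv ℝ X x) + (fderiv ℝ T x).flip (X x)) x :=
    (hTd x).hasFDerivAt.clm_apply (hXd x).hasFDerivAt
  have hsc : ∀ w, HasFDerivAt (fun y => T y (X y) w)
      ((T x (X x)).comp (0 : EuclideanSpace ℝ (Fin n) →L[ℝ] EuclideanSpace ℝ (Fin n))
        + ((T x).comp (fderiv ℝ X x) + (fderiv ℝ T x).flip (X x)).flip w) x :=
    fun w => h1.clm_apply (hasFDerivAt_const w x)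
  have hZder : HasFDerivAt Y
      (∑ j, ((T x (X x)).comp (0 : EuclideanSpace ℝ (Fin n) →L[ℝ] EuclideanSpace ℝ (Fin n))
        + ((T x).comp (fderiv ℝ X x) + (fderiv ℝ T x).flip (X x)).flip (e j)).smulRight (e j)) x := by
    rw [hZ]
    exact HasFDerivAt.fun_sum (fun j _ => (hsc (e j)).smul_const (e j))
  have hfY : ∀ i, fderiv ℝ Y x (e i) =
      ∑ j, (T x (fderiv ℝ X x (e i)) (e j) + fderiv ℝ T x (e i) (X x) (e j)) • e j := by
    intro i
    rw [hZder.fderiv]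
    simp only [ContinuousLinearMap.coe_sum', Finset.sum_apply,
      ContinuousLinearMap.smulRight_apply, ContinuousLinearMap.add_apply,
      ContinuousLinearMap.comp_apply, ContinuousLinearMap.flip_apply,
      ContinuousLinearMap.zero_apply, map_zero, zero_add]
  -- symmetry of the derivative of T
  have hdsymm : ∀ v a b, fderiv ℝ T x v a b = fderiv ℝ T x v b a := by
    intro v a b
    have hTa : ∀ a b : EuclideanSpace ℝ (Fin n), HasFDerivAt (fun y => T y a b)
        ((T x a).comp (0 : EuclideanSpace ℝ (Fin n) →L[ℝ] EuclideanSpace ℝ (Fin n))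
          + ((T x).comp (0 : EuclideanSpace ℝ (Fin n) →L[ℝ] EuclideanSpace ℝ (Fin n))
            + (fderiv ℝ T x).flip a).flip b) x := by
      intro a b
      exact ((hTd x).hasFDerivAt.clm_apply (hasFDerivAt_const a x)).clm_apply
        (hasFDerivAt_const b x)
    have hfun : (fun y => T y a b) = fun y => T y b a := by
      funext y; exact hTsymm y a b
    have h2 := hTa b a
    rw [← hfun] at h2
    have hv := ContinuousLinearMap.ext_iff.mp ((hTa a b).unique h2) v
    simpa only [ContinuousLinearMap.add_apply, ContinuousLinearMap.flip_apply, ContinuousLinearMap.comp_apply, ContinuousLinearMap.zero_apply, map_zero, zero_add] using hv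
  -- compute divE Y x
  have hdiv : divE n Y x =
      ∑ i, (T x (fderiv ℝ X x (e i)) (e i) + fderiv ℝ T x (e i) (X x) (e i)) := by
    unfold divE
    refine Finset.sum_congr rfl (fun i _ => ?_)
    rw [← he, hfY i, sum_inner]
    rw [Finset.sum_eq_single i]
    · rw [real_inner_smul_left, hinner_e, he_app]
      simp
    · intro j _ hj
      rw [real_inner_smul_left, hinner_e, he_app]
      simp [Ne.symm hj]
    · intro h; exact absurd (Finset.mem_univ i) h
  have hdivfree : ∑ i, fderiv ℝ T x (e i) (X x) (e i) = 0 := by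
    calc ∑ i, fderiv ℝ T x (e i) (X x) (e i)
        = ∑ i, fderiv ℝ T x (e i) (e i) (X x) :=
          Finset.sum_congr rfl (fun i _ => hdsymm (e i) (X x) (e i))
      _ = 0 := hTdivfree x (X x)
  -- second sum
  set a : Fin n → Fin n → ℝ := fun i j => (fderiv ℝ X x (e i)) j with ha
  set t : Fin n → Fin n → ℝ := fun i j => T x (e i) (e j) with ht
  have hS : ∑ i, T x (fderiv ℝ X x (e i)) (e i) = ∑ i, ∑ j, a i j * t j i := by
    refine Finset.sum_congr rfl (fun i _ => ?_)
    conv_lhs => rw [← hrepr (fderiv ℝ X x (e i))]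
    rw [map_sum, ContinuousLinearMap.coe_sum', Finset.sum_apply]
    refine Finset.sum_congr rfl (fun j _ => ?_)
    rw [map_smul]
    simp [ha, ht, mul_comm]
  have hck' : ∀ i j, a i j + a j i = (2 / (n : ℝ)) * divE n X x * (if i = j then 1 else 0) := by
    intro i j
    have h := hCK x (e i) (e j)
    rw [hinner_e, hinner_e] at h
    have hee : ⟪e i, e j⟫ = (if i = j then (1:ℝ) else 0) := by
      rw [hinner_e, he_app]
      simp [eq_comm]
    rw [hee] at h
    exact h
  have htsymm : ∀ i j, t i j = t j i := fun i j => hTsymm x (e i) (e j)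
  set S := ∑ i, ∑ j, a i j * t j i with hSdef
  have h2S : S + S = (2 / (n : ℝ)) * divE n X x * ∑ i, t i i := by
    have hswap : S = ∑ i, ∑ j, a j i * t j i := by
      rw [hSdef, Finset.sum_comm]
      exact Finset.sum_congr rfl (fun i _ => Finset.sum_congr rfl (fun j _ => by rw [htsymm i j]))
    calc S + S = ∑ i, ∑ j, (a i j + a j i) * t j i := by
          nth_rewrite 2 [hswap]
          nth_rewrite 1 [hSdef]
          rw [← Finset.sum_add_distrib]
          refine Finset.sum_congr rfl (fun i _ => ?_)
          rw [← Finset.sum_add_distrib]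
          exact Finset.sum_congr rfl (fun j _ => by ring)
      _ = ∑ i, ∑ j, (2 / (n : ℝ)) * divE n X x * (if i = j then 1 else 0) * t j i := by
          exact Finset.sum_congr rfl (fun i _ => Finset.sum_congr rfl (fun j _ => by
            rw [hck' i j]))
      _ = (2 / (n : ℝ)) * divE n X x * ∑ i, t i i := by
          rw [Finset.mul_sum]
          refine Finset.sum_congr rfl (fun i _ => ?_)
          rw [Finset.sum_eq_single i]
          · simp
          · intro j _ hj; simp [Ne.symm hj]
          · intro h; exact absurd (Finset.mem_univ i) h
  have hfinal : S = (1 / (n : ℝ)) * (∑ i, t i i) * divE n X x := by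
    have h : (2:ℝ) * S = 2 * ((1 / (n : ℝ)) * (∑ i, t i i) * divE n X x) := by
      rw [two_mul, h2S]; ring
    linarith
  rw [hdiv, Finset.sum_add_distrib, hdivfree, add_zero, hS]
  exact hfinal
end

section
/- Let n ≥ 3 and let X be a C³ conformal Killing field on EuclideanSpace ℝ n. Then the Hessian of the divergence of X vanishes identically: for every x, v, w one has Hess(div X) x (v, w) = 0; equivalently, div X is an affine function. (This is the Euclidean case, Einstein constant λ = 0, of Lemma 2.2 of the paper: the divergence of a conformal Killing field of an Einstein metric with Ric = λ(n−1)g satisfies Hess(δX) = −λ(δX)g, so in the flat case δX lies in the kernel of the adjoint (DScal)_e* of the linearized scalar curvature operator.) -/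
open scoped RealInnerProductSpace

namespace HessAux

variable {n : ℕ}

/-- Partial derivative of a scalar field in direction `stdBasis n i`. -/
noncomputable def pd (i : Fin n) (g : EuclideanSpace ℝ (Fin n) → ℝ) :
    EuclideanSpace ℝ (Fin n) → ℝ :=
  fun x => fderiv ℝ g x (stdBasis n i)

lemma pd_contDiff {m : ℕ} {g : EuclideanSpace ℝ (Fin n) → ℝ}
    (hg : ContDiff ℝ ((m : ℕ∞) + 1) g) (i : Fin n) : ContDiff ℝ m (pd i g) := by
  have h1 : ContDiff ℝ m (fderiv ℝ g) := hg.fderiv_right le_rfl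
  exact h1.clm_apply contDiff_const

lemma pd_diff {g : EuclideanSpace ℝ (Fin n) → ℝ}
    (hg : ContDiff ℝ 1 g) (i : Fin n) : Differentiable ℝ g :=
  hg.differentiable one_ne_zero

lemma fderiv_snd_diff {g : EuclideanSpace ℝ (Fin n) → ℝ} (hg : ContDiff ℝ 2 g)
    (x : EuclideanSpace ℝ (Fin n)) : DifferentiableAt ℝ (fderiv ℝ g) x := by
  have : ContDiff ℝ 1 (fderiv ℝ g) := hg.fderiv_right (by norm_num)
  exact (this.differentiable one_ne_zero) x

lemma pd_pd_eq {g : EuclideanSpace ℝ (Fin n) → ℝ} (hg : ContDiff ℝ 2 g)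
    (i j : Fin n) (x : EuclideanSpace ℝ (Fin n)) :
    pd i (pd j g) x = fderiv ℝ (fderiv ℝ g) x (stdBasis n i) (stdBasis n j) := by
  have hdiff := fderiv_snd_diff hg x
  show fderiv ℝ (fun y => (fderiv ℝ g y) (stdBasis n j)) x (stdBasis n i) = _
  rw [fderiv_clm_apply hdiff (differentiableAt_const _)]
  simp

lemma pd_comm {g : EuclideanSpace ℝ (Fin n) → ℝ} (hg : ContDiff ℝ 2 g)
    (i j : Fin n) (x : EuclideanSpace ℝ (Fin n)) :
    pd i (pd j g) x = pd j (pd i g) x := by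
  rw [pd_pd_eq hg, pd_pd_eq hg]
  exact second_derivative_symmetric
    (fun y => ((hg.differentiable two_ne_zero) y).hasFDerivAt)
    (fderiv_snd_diff hg x).hasFDerivAt _ _

lemma pd_const_mul {g : EuclideanSpace ℝ (Fin n) → ℝ} (hg : Differentiable ℝ g)
    (c : ℝ) (k : Fin n) (x : EuclideanSpace ℝ (Fin n)) :
    pd k (fun y => c * g y) x = c * pd k g x := by
  unfold pd
  rw [fderiv_const_mul (hg x) c]
  simp

lemma pd_add {g h : EuclideanSpace ℝ (Fin n) → ℝ} (hg : Differentiable ℝ g)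
    (hh : Differentiable ℝ h) (k : Fin n) (x : EuclideanSpace ℝ (Fin n)) :
    pd k (fun y => g y + h y) x = pd k g x + pd k h x := by
  unfold pd
  rw [fderiv_fun_add (hg x) (hh x)]
  simp

lemma pd_sub {g h : EuclideanSpace ℝ (Fin n) → ℝ} (hg : Differentiable ℝ g)
    (hh : Differentiable ℝ h) (k : Fin n) (x : EuclideanSpace ℝ (Fin n)) :
    pd k (fun y => g y - h y) x = pd k g x - pd k h x := by
  unfold pd
  rw [fderiv_fun_sub (hg x) (hh x)]
  simp

lemma comp_fderiv {X : EuclideanSpace ℝ (Fin n) → EuclideanSpace ℝ (Fin n)}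
    {x : EuclideanSpace ℝ (Fin n)} (hX : DifferentiableAt ℝ X x) (j : Fin n)
    (v : EuclideanSpace ℝ (Fin n)) :
    fderiv ℝ (fun y => X y j) x v = fderiv ℝ X x v j := by
  have h := ((EuclideanSpace.proj (𝕜 := ℝ) j).hasFDerivAt (x := X x)).comp x hX.hasFDerivAt
  have h2 : fderiv ℝ (fun y => X y j) x = (EuclideanSpace.proj (𝕜 := ℝ) j).comp (fderiv ℝ X x) :=
    h.fderiv
  rw [h2]; rfl

lemma exists_third (hn : 3 ≤ n) (a b : Fin n) : ∃ m : Fin n, m ≠ a ∧ m ≠ b := by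
  have hsub : ({a, b} : Finset (Fin n)) ⊆ Finset.univ := Finset.subset_univ _
  have hcard : ({a, b} : Finset (Fin n)).card ≤ 2 := Finset.card_insert_le _ _ |>.trans (by simp)
  have hpos : 0 < (Finset.univ \ ({a, b} : Finset (Fin n))).card := by
    rw [Finset.card_sdiff_of_subset hsub]
    have : (Finset.univ : Finset (Fin n)).card = n := by simp
    omega
  obtain ⟨m, hm⟩ := Finset.card_pos.mp hpos
  simp only [Finset.mem_sdiff, Finset.mem_insert, Finset.mem_singleton] at hm
  exact ⟨m, fun h => hm.2 (Or.inl h), fun h => hm.2 (Or.inr h)⟩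

end HessAux

open HessAux in
/-- **Euclidean case of Lemma 2.2 (λ = 0).** If `n ≥ 3` and `X` is a `C³` conformal Killing
field of the Euclidean metric, then the Hessian of `div X` vanishes identically, i.e.
`div X` is an affine function. -/
theorem hessian_div_conformal_killing_eq_zero
    (n : ℕ) (hn : 3 ≤ n)
    (X : EuclideanSpace ℝ (Fin n) → EuclideanSpace ℝ (Fin n))
    (hX : ContDiff ℝ 3 X)
    (hCK : ∀ (x v w : EuclideanSpace ℝ (Fin n)),
      ⟪fderiv ℝ X x v, w⟫ + ⟪fderiv ℝ X x w, v⟫ = (2 / (n : ℝ)) * divE n X x * ⟪v, w⟫) :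
    ∀ (x v w : EuclideanSpace ℝ (Fin n)),
      fderiv ℝ (fderiv ℝ (divE n X)) x v w = 0 := by
  set c : ℝ := 2 / n with hc
  -- basic smoothness facts
  have hXdiff : Differentiable ℝ X := hX.differentiable (by norm_num)
  have hY3 : ∀ j : Fin n, ContDiff ℝ 3 (fun y => X y j) :=
    fun j => (EuclideanSpace.proj (𝕜 := ℝ) j).contDiff.comp hX
  have hY2 : ∀ j : Fin n, ContDiff ℝ 2 (fun y => X y j) :=
    fun j => (hY3 j).of_le (by norm_num)
  have hpdY2 : ∀ (i k : Fin n), ContDiff ℝ 2 (pd i (fun y => X y k)) :=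
    fun i k => pd_contDiff (m := 2) ((hY3 k).of_le (by norm_num)) i
  have hpdYdiff : ∀ (i k : Fin n), Differentiable ℝ (pd i (fun y => X y k)) :=
    fun i k => (hpdY2 i k).differentiable two_ne_zero
  have hpdpdYdiff : ∀ (i j k : Fin n), Differentiable ℝ (pd i (pd j (fun y => X y k))) :=
    fun i j k => (pd_contDiff (m := 1) ((hpdY2 j k).of_le (by norm_num)) i).differentiable (by simp)
  -- divergence in coordinates
  have hdivE : ∀ x, divE n X x = ∑ i, pd i (fun y => X y i) x := by
    intro x
    unfold divE
    refine Finset.sum_congr rfl fun i _ => ?_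
    rw [show pd i (fun y => X y i) x = fderiv ℝ (fun y => X y i) x (stdBasis n i) from rfl,
        comp_fderiv (hXdiff x) i]
    simp [stdBasis, EuclideanSpace.inner_single_right]
  have hf2 : ContDiff ℝ 2 (divE n X) := by
    rw [funext hdivE]
    exact ContDiff.sum fun i _ => hpdY2 i i
  have hfdiff : Differentiable ℝ (divE n X) := hf2.differentiable two_ne_zero
  have hPdiff : ∀ a : Fin n, Differentiable ℝ (pd a (divE n X)) :=
    fun a => (pd_contDiff (m := 1) (hf2.of_le (by norm_num)) a).differentiable (by simp)
  -- the conformal Killing equation in coordinates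
  have ck : ∀ (i j : Fin n) x, pd i (fun y => X y j) x + pd j (fun y => X y i) x
      = (if i = j then (1:ℝ) else 0) * (c * divE n X x) := by
    intro i j x
    have h := hCK x (stdBasis n i) (stdBasis n j)
    have e1 : ⟪fderiv ℝ X x (stdBasis n i), stdBasis n j⟫ = pd i (fun y => X y j) x := by
      rw [show pd i (fun y => X y j) x = fderiv ℝ (fun y => X y j) x (stdBasis n i) from rfl,
        comp_fderiv (hXdiff x) j]
      simp [stdBasis, EuclideanSpace.inner_single_right]
    have e2 : ⟪fderiv ℝ X x (stdBasis n j), stdBasis n i⟫ = pd j (fun y => X y i) x := by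
      rw [show pd j (fun y => X y i) x = fderiv ℝ (fun y => X y i) x (stdBasis n j) from rfl,
        comp_fderiv (hXdiff x) i]
      simp [stdBasis, EuclideanSpace.inner_single_right]
    have e3 : ⟪(stdBasis n i : EuclideanSpace ℝ (Fin n)), stdBasis n j⟫
        = (if i = j then (1:ℝ) else 0) := by
      simp [stdBasis, EuclideanSpace.inner_single_right, EuclideanSpace.single_apply, eq_comm]
    rw [e1, e2, e3] at h
    rw [h]; ring
  -- differentiate once
  have ck' : ∀ (k i j : Fin n) x,
      pd k (pd i (fun y => X y j)) x + pd k (pd j (fun y => X y i)) x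
      = (if i = j then (1:ℝ) else 0) * (c * pd k (divE n X) x) := by
    intro k i j x
    have hfun2 : (fun y => pd i (fun z => X z j) y + pd j (fun z => X z i) y)
        = fun y => ((if i = j then (1:ℝ) else 0) * c) * divE n X y := by
      funext y; rw [ck i j y]; ring
    calc pd k (pd i (fun z => X z j)) x + pd k (pd j (fun z => X z i)) x
        = pd k (fun y => pd i (fun z => X z j) y + pd j (fun z => X z i) y) x :=
          (pd_add (hpdYdiff i j) (hpdYdiff j i) k x).symm
      _ = pd k (fun y => ((if i = j then (1:ℝ) else 0) * c) * divE n X y) x := by rw [hfun2]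
      _ = ((if i = j then (1:ℝ) else 0) * c) * pd k (divE n X) x := pd_const_mul hfdiff _ k x
      _ = (if i = j then (1:ℝ) else 0) * (c * pd k (divE n X) x) := by ring
  -- solve for the second derivatives of X
  have b_eq : ∀ (i j k : Fin n) x,
      2 * pd i (pd j (fun y => X y k)) x
      = (if j = k then (1:ℝ) else 0) * (c * pd i (divE n X) x)
        + (if i = k then (1:ℝ) else 0) * (c * pd j (divE n X) x)
        - (if i = j then (1:ℝ) else 0) * (c * pd k (divE n X) x) := by
    intro i j k x
    have q1 := ck' i j k x
    have q2 := ck' j i k x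
    have q3 := ck' k i j x
    have s1 := pd_comm (hY2 k) j i x
    have s2 := pd_comm (hY2 j) i k x
    have s3 := pd_comm (hY2 i) j k x
    linarith [q1, q2, q3, s1, s2, s3]
  -- differentiate again
  have c_eq : ∀ (l i j k : Fin n) x,
      2 * pd l (pd i (pd j (fun y => X y k))) x
      = (if j = k then (1:ℝ) else 0) * (c * pd l (pd i (divE n X)) x)
        + (if i = k then (1:ℝ) else 0) * (c * pd l (pd j (divE n X)) x)
        - (if i = j then (1:ℝ) else 0) * (c * pd l (pd k (divE n X)) x) := by
    intro l i j k x
    have hfun3 : pd i (pd j (fun z => X z k))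
        = fun y => (((if j = k then (1:ℝ) else 0) * c / 2) * pd i (divE n X) y
                  + ((if i = k then (1:ℝ) else 0) * c / 2) * pd j (divE n X) y)
                  - ((if i = j then (1:ℝ) else 0) * c / 2) * pd k (divE n X) y := by
      funext y
      have := b_eq i j k y
      linarith [this]
    have hdA : Differentiable ℝ (fun y =>
        ((if j = k then (1:ℝ) else 0) * c / 2) * pd i (divE n X) y
        + ((if i = k then (1:ℝ) else 0) * c / 2) * pd j (divE n X) y) :=
      ((hPdiff i).const_mul _).add ((hPdiff j).const_mul _)
    have hdB : Differentiable ℝ (fun y =>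
        ((if i = j then (1:ℝ) else 0) * c / 2) * pd k (divE n X) y) :=
      (hPdiff k).const_mul _
    calc 2 * pd l (pd i (pd j (fun z => X z k))) x
        = 2 * pd l (fun y => (((if j = k then (1:ℝ) else 0) * c / 2) * pd i (divE n X) y
            + ((if i = k then (1:ℝ) else 0) * c / 2) * pd j (divE n X) y)
            - ((if i = j then (1:ℝ) else 0) * c / 2) * pd k (divE n X) y) x := by rw [hfun3]
      _ = 2 * (pd l (fun y => ((if j = k then (1:ℝ) else 0) * c / 2) * pd i (divE n X) y
            + ((if i = k then (1:ℝ) else 0) * c / 2) * pd j (divE n X) y) x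
            - pd l (fun y => ((if i = j then (1:ℝ) else 0) * c / 2) * pd k (divE n X) y) x) := by
          rw [pd_sub hdA hdB l x]
      _ = 2 * ((pd l (fun y => ((if j = k then (1:ℝ) else 0) * c / 2) * pd i (divE n X) y) x
            + pd l (fun y => ((if i = k then (1:ℝ) else 0) * c / 2) * pd j (divE n X) y) x)
            - pd l (fun y => ((if i = j then (1:ℝ) else 0) * c / 2) * pd k (divE n X) y) x) := by
          rw [pd_add ((hPdiff i).const_mul _) ((hPdiff j).const_mul _) l x]
      _ = (if j = k then (1:ℝ) else 0) * (c * pd l (pd i (divE n X)) x)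
            + (if i = k then (1:ℝ) else 0) * (c * pd l (pd j (divE n X)) x)
            - (if i = j then (1:ℝ) else 0) * (c * pd l (pd k (divE n X)) x) := by
          rw [pd_const_mul (hPdiff i) _ l x, pd_const_mul (hPdiff j) _ l x,
            pd_const_mul (hPdiff k) _ l x]
          ring
  -- the key symmetry constraint
  have star : ∀ (l i j k : Fin n) x,
      (if i = k then (1:ℝ) else 0) * (c * pd l (pd j (divE n X)) x)
      - (if i = j then (1:ℝ) else 0) * (c * pd l (pd k (divE n X)) x)
      = (if l = k then (1:ℝ) else 0) * (c * pd i (pd j (divE n X)) x)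
      - (if l = j then (1:ℝ) else 0) * (c * pd i (pd k (divE n X)) x) := by
    intro l i j k x
    have e1 := c_eq l i j k x
    have e2 := c_eq i l j k x
    have s0 : pd i (pd l (pd j (fun y => X y k))) x = pd l (pd i (pd j (fun y => X y k))) x :=
      pd_comm (hpdY2 j k) i l x
    have sH : pd i (pd l (divE n X)) x = pd l (pd i (divE n X)) x := pd_comm hf2 i l x
    rw [s0, sH] at e2
    linarith [e1, e2]
  -- all second derivatives of the divergence vanish
  have hcH : ∀ (a b : Fin n) (x : EuclideanSpace ℝ (Fin n)),
      c * pd a (pd b (divE n X)) x = 0 := by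
    have hoff : ∀ (a b : Fin n) (x : EuclideanSpace ℝ (Fin n)), a ≠ b →
        c * pd a (pd b (divE n X)) x = 0 := by
      intro a b x hab
      obtain ⟨m, hma, hmb⟩ := exists_third hn a b
      have h := star m a b m x
      simp only [if_neg (Ne.symm hma), if_neg hab, if_pos rfl, if_neg hmb,
        eq_self_iff_true, if_true, zero_mul, one_mul, sub_zero, zero_sub, neg_zero] at h
      linarith [h]
    intro a b x
    rcases eq_or_ne a b with rfl | hab
    · obtain ⟨b, hba, _⟩ := exists_third hn a a
      obtain ⟨m, hma, hmb⟩ := exists_third hn a b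
      have h1 := star b a b a x
      have h2 := star m a m a x
      have h3 := star m b m b x
      simp only [if_pos rfl, if_neg (Ne.symm hba), if_neg hba,
        if_neg (Ne.symm hma), if_neg hma, if_neg (Ne.symm hmb), if_neg hmb,
        eq_self_iff_true, if_true, zero_mul, one_mul, sub_zero, zero_sub, neg_zero] at h1 h2 h3
      linarith [h1, h2, h3]
    · exact hoff a b x hab
  have hc0 : c ≠ 0 := by
    rw [hc]
    have : (0:ℝ) < n := by exact_mod_cast Nat.lt_of_lt_of_le (by norm_num) hn
    positivity
  have hH0 : ∀ (a b : Fin n) (x : EuclideanSpace ℝ (Fin n)),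
      pd a (pd b (divE n X)) x = 0 :=
    fun a b x => (mul_eq_zero.mp (hcH a b x)).resolve_left hc0
  -- conclude by bilinearity
  intro x v w
  have key : ∀ a b : Fin n,
      fderiv ℝ (fderiv ℝ (divE n X)) x (stdBasis n a) (stdBasis n b) = 0 :=
    fun a b => by rw [← pd_pd_eq hf2 a b x]; exact hH0 a b x
  have hv : v = ∑ a, v a • stdBasis n a := by
    have h := (EuclideanSpace.basisFun (Fin n) ℝ).sum_repr v
    simp only [EuclideanSpace.basisFun_repr, EuclideanSpace.basisFun_apply] at h
    exact h.symm
  have hw : w = ∑ b, w b • stdBasis n b := by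
    have h := (EuclideanSpace.basisFun (Fin n) ℝ).sum_repr w
    simp only [EuclideanSpace.basisFun_repr, EuclideanSpace.basisFun_apply] at h
    exact h.symm
  calc fderiv ℝ (fderiv ℝ (divE n X)) x v w
      = fderiv ℝ (fderiv ℝ (divE n X)) x (∑ a, v a • stdBasis n a) (∑ b, w b • stdBasis n b) := by
        rw [← hv, ← hw]
    _ = 0 := by
        simp [map_sum, ContinuousLinearMap.sum_apply, map_smul,
          ContinuousLinearMap.smul_apply, key, smul_eq_mul]
end

section
/- Let n ≥ 2 and let f : EuclideanSpace ℝ n → ℝ be of class C². Then f satisfies Hess f x (v, w) + (Δf x)·⟪v, w⟫ = 0 for every x, v, w (where Δf x = −(trace of Hess f x) is the geometer's Laplacian) if and only if f is affine, i.e. there exist c ∈ ℝ and a continuous linear map L : EuclideanSpace ℝ n → ℝ with f x = c + L x for all x. (This is the paper's assertion that the kernel of the adjoint (DScal)_e* V = Hess^e V + (Δ^e V)·e of the linearized scalar curvature operator at the Euclidean metric consists exactly of the affine functions.) -/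
open scoped RealInnerProductSpace

/-- The Euclidean Hessian of a function, `Hess f x (v, w) = fderiv (fderiv f) x v w`. -/
noncomputable def hessE (n : ℕ) (f : EuclideanSpace ℝ (Fin n) → ℝ)
    (x v w : EuclideanSpace ℝ (Fin n)) : ℝ :=
  fderiv ℝ (fderiv ℝ f) x v w

/-- The geometer's Laplacian, `Δf = −(trace of Hess f)`. -/
noncomputable def laplE (n : ℕ) (f : EuclideanSpace ℝ (Fin n) → ℝ)
    (x : EuclideanSpace ℝ (Fin n)) : ℝ :=
  -∑ i : Fin n, hessE n f x (stdBasis n i) (stdBasis n i)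

/-- **The kernel of `(DScal)_e*` consists of the affine functions.** For `n ≥ 2` and `f`
of class `C²` on Euclidean space, `Hess f + (Δf)·e = 0` holds identically if and only if
`f` is affine. -/
theorem kernel_adjoint_linearized_scalar_curvature_eq_affine
    (n : ℕ) (hn : 2 ≤ n)
    (f : EuclideanSpace ℝ (Fin n) → ℝ)
    (hf : ContDiff ℝ 2 f) :
    (∀ (x v w : EuclideanSpace ℝ (Fin n)),
        hessE n f x v w + laplE n f x * ⟪v, w⟫ = 0) ↔
      ∃ (c : ℝ) (L : EuclideanSpace ℝ (Fin n) →L[ℝ] ℝ),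
        ∀ x : EuclideanSpace ℝ (Fin n), f x = c + L x := by
  have hone : ∀ i : Fin n, ⟪stdBasis n i, stdBasis n i⟫ = (1 : ℝ) := by
    intro i
    simp [stdBasis, EuclideanSpace.inner_single_left]
  constructor
  · intro h
    -- First: the Laplacian vanishes.
    have hlapl : ∀ x, laplE n f x = 0 := by
      intro x
      have hs : ∑ i : Fin n, (hessE n f x (stdBasis n i) (stdBasis n i)
          + laplE n f x * ⟪stdBasis n i, stdBasis n i⟫) = 0 :=
        Finset.sum_eq_zero fun i _ => h x _ _
      have : -laplE n f x + (n : ℝ) * laplE n f x = 0 := by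
        rw [Finset.sum_add_distrib] at hs
        simp only [hone, mul_one, Finset.sum_const, Finset.card_univ,
          Fintype.card_fin, nsmul_eq_mul] at hs
        rw [← hs]
        simp [laplE]
      have hn1 : ((n : ℝ) - 1) ≠ 0 := by
        have : (2 : ℝ) ≤ n := by exact_mod_cast hn
        linarith
      have : ((n : ℝ) - 1) * laplE n f x = 0 := by linarith
      exact (mul_eq_zero.1 this).resolve_left hn1
    have hhess : ∀ x v w, hessE n f x v w = 0 := by
      intro x v w
      have := h x v w
      rw [hlapl x] at this
      linarith
    -- The second derivative vanishes, so fderiv f is constant.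
    have hF2 : ∀ x, fderiv ℝ (fderiv ℝ f) x = 0 := by
      intro x
      ext v w
      exact hhess x v w
    have hdF : Differentiable ℝ (fderiv ℝ f) :=
      (hf.fderiv_right (m := 1) (by norm_num)).differentiable (by norm_num)
    have hconst : ∀ x, fderiv ℝ f x = fderiv ℝ f 0 := fun x =>
      is_const_of_fderiv_eq_zero hdF hF2 x 0
    set L := fderiv ℝ f 0 with hL
    refine ⟨f 0, L, fun x => ?_⟩
    have hdf : Differentiable ℝ f := hf.differentiable (by norm_num)
    have hg : ∀ x, fderiv ℝ (fun y => f y - L y) x = 0 := by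
      intro x
      rw [fderiv_fun_sub (hdf x) (L.differentiable x), hconst x, L.fderiv]
      simp
    have hgc : f x - L x = f 0 - L 0 :=
      is_const_of_fderiv_eq_zero (hdf.sub L.differentiable) hg x 0
    simp only [map_zero, sub_zero] at hgc
    linarith
  · rintro ⟨c, L, hfe⟩
    have hfun : f = fun x => c + L x := funext hfe
    have hd1 : ∀ x, fderiv ℝ f x = L := by
      intro x
      rw [hfun]
      rw [fderiv_const_add, L.fderiv]
    have hd2 : ∀ x, fderiv ℝ (fderiv ℝ f) x = 0 := by
      intro x
      have : fderiv ℝ f = fun _ => L := funext hd1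
      rw [this, fderiv_fun_const]
      rfl
    have hhess : ∀ x v w, hessE n f x v w = 0 := by
      intro x v w
      simp [hessE, hd2 x]
    intro x v w
    simp [hhess, laplE]
end

section
/- Let n ≥ 1, fix an index α, and let e_α be the α-th standard basis vector of EuclideanSpace ℝ n. Define the vector field X (the essential conformal Killing field of ℝⁿ obtained by conjugating a translation by the inversion map) by X x = ‖x‖²·e_α − 2·⟪x, e_α⟫·x. Then for every x, v, w one has ⟪fderiv X x v, w⟫ + ⟪fderiv X x w, v⟫ = −4·⟪x, e_α⟫·⟪v, w⟫, and div X x = −2n·⟪x, e_α⟫. In particular X is a conformal Killing field and the negative divergence satisfies δ^e X = 2n·x^α, as used in the definition of the Ricci version of the center of mass. -/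
open scoped RealInnerProductSpace

/-- The essential conformal Killing field `X⁽ᵅ⁾ x = ‖x‖²·e_α − 2⟪x, e_α⟫·x` of `ℝⁿ`,
obtained by conjugating a translation by the inversion map. -/
noncomputable def invTranslation (n : ℕ) (α : Fin n)
    (x : EuclideanSpace ℝ (Fin n)) : EuclideanSpace ℝ (Fin n) :=
  ‖x‖ ^ 2 • stdBasis n α - (2 * ⟪x, stdBasis n α⟫) • x


lemma fderiv_invTranslation_apply (n : ℕ) (α : Fin n) (x v : EuclideanSpace ℝ (Fin n)) :
    fderiv ℝ (invTranslation n α) x v =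
      (2 * ⟪x, v⟫) • stdBasis n α - (2 * ⟪v, stdBasis n α⟫) • x
        - (2 * ⟪x, stdBasis n α⟫) • v := by
  have hfun : invTranslation n α = fun y : EuclideanSpace ℝ (Fin n) =>
      (⟪y, y⟫ : ℝ) • stdBasis n α - (2 * ⟪y, stdBasis n α⟫) • y := by
    funext y
    rw [invTranslation, real_inner_self_eq_norm_sq]
  have hA : HasFDerivAt (fun y : EuclideanSpace ℝ (Fin n) => (⟪y, y⟫ : ℝ))
      ((fderivInnerCLM ℝ (x, x)).comp ((ContinuousLinearMap.id ℝ _).prod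
        (ContinuousLinearMap.id ℝ _))) x :=
    (hasFDerivAt_id x).inner ℝ (hasFDerivAt_id x)
  have hB : HasFDerivAt (fun y : EuclideanSpace ℝ (Fin n) => (⟪y, stdBasis n α⟫ : ℝ))
      ((fderivInnerCLM ℝ (x, stdBasis n α)).comp ((ContinuousLinearMap.id ℝ _).prod 0)) x :=
    (hasFDerivAt_id x).inner ℝ (hasFDerivAt_const _ x)
  have h := ((hA.smul (hasFDerivAt_const (stdBasis n α) x)).sub
    ((hB.const_mul 2).smul (hasFDerivAt_id x)))
  simp only [id_eq] at h
  have h' : HasFDerivAt (fun y : EuclideanSpace ℝ (Fin n) =>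
      (⟪y, y⟫ : ℝ) • stdBasis n α - (2 * ⟪y, stdBasis n α⟫) • y) _ x := h
  rw [hfun, h'.fderiv]
  simp [fderivInnerCLM_apply, real_inner_comm v x]
  ring_nf
  module

lemma sym_id (n : ℕ) (α : Fin n) (x v w : EuclideanSpace ℝ (Fin n)) :
    ⟪fderiv ℝ (invTranslation n α) x v, w⟫ + ⟪fderiv ℝ (invTranslation n α) x w, v⟫ =
      -4 * ⟪x, stdBasis n α⟫ * ⟪v, w⟫ := by
  rw [fderiv_invTranslation_apply, fderiv_invTranslation_apply]
  simp only [inner_sub_left, real_inner_smul_left]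
  rw [real_inner_comm (stdBasis n α) w, real_inner_comm (stdBasis n α) v, real_inner_comm w v]
  ring

lemma div_id (n : ℕ) (α : Fin n) (x : EuclideanSpace ℝ (Fin n)) :
    divE n (invTranslation n α) x = -(2 * (n : ℝ)) * ⟪x, stdBasis n α⟫ := by
  unfold divE
  have h : ∀ i : Fin n, ⟪fderiv ℝ (invTranslation n α) x (stdBasis n i), stdBasis n i⟫ =
      2 * ⟪x, stdBasis n i⟫ * ⟪stdBasis n α, stdBasis n i⟫
        - 2 * ⟪stdBasis n i, stdBasis n α⟫ * ⟪x, stdBasis n i⟫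
        - 2 * ⟪x, stdBasis n α⟫ := by
    intro i
    rw [fderiv_invTranslation_apply]
    have : (⟪stdBasis n i, stdBasis n i⟫ : ℝ) = 1 := by
      simp [stdBasis, EuclideanSpace.inner_single_left]
    simp only [inner_sub_left, real_inner_smul_left, this]
    ring
  rw [Finset.sum_congr rfl fun i _ => h i]
  simp only [Finset.sum_sub_distrib]
  have : ∀ i : Fin n, 2 * ⟪x, stdBasis n i⟫ * ⟪stdBasis n α, stdBasis n i⟫
      = 2 * ⟪stdBasis n i, stdBasis n α⟫ * ⟪x, stdBasis n i⟫ := by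
    intro i; rw [real_inner_comm (stdBasis n i) (stdBasis n α)]; ring
  rw [Finset.sum_congr rfl fun i _ => this i]
  simp [Finset.card_univ]
  ring

/-- **The essential conformal Killing field and its divergence.** For
`X x = ‖x‖²·e_α − 2⟪x, e_α⟫·x` one has the symmetrized-derivative identity
`⟪fderiv X x v, w⟫ + ⟪fderiv X x w, v⟫ = −4⟪x, e_α⟫⟪v, w⟫` and `div X x = −2n⟪x, e_α⟫`;
in particular `X` is a conformal Killing field and `δ^e X = −div X = 2n·x^α`. -/
theorem invTranslation_conformal_killing (n : ℕ) (hn : 1 ≤ n) (α : Fin n) :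
    (∀ (x v w : EuclideanSpace ℝ (Fin n)),
        ⟪fderiv ℝ (invTranslation n α) x v, w⟫ + ⟪fderiv ℝ (invTranslation n α) x w, v⟫ =
          -4 * ⟪x, stdBasis n α⟫ * ⟪v, w⟫) ∧
    (∀ x : EuclideanSpace ℝ (Fin n),
        divE n (invTranslation n α) x = -(2 * (n : ℝ)) * ⟪x, stdBasis n α⟫) ∧
    (∀ (x v w : EuclideanSpace ℝ (Fin n)),
        ⟪fderiv ℝ (invTranslation n α) x v, w⟫ + ⟪fderiv ℝ (invTranslation n α) x w, v⟫ =
          (2 / (n : ℝ)) * divE n (invTranslation n α) x * ⟪v, w⟫) ∧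
    (∀ x : EuclideanSpace ℝ (Fin n),
        -divE n (invTranslation n α) x = 2 * (n : ℝ) * ⟪x, stdBasis n α⟫) := by
  refine ⟨sym_id n α, div_id n α, ?_, ?_⟩
  · intro x v w
    rw [sym_id n α x v w, div_id n α x]
    have hn' : (n : ℝ) ≠ 0 := by positivity
    field_simp
    ring
  · intro x
    rw [div_id n α x]
    ring
end
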